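/- Let m ∈ ℝ and R > |m|/2, and on E_R = {x ∈ ℝ³ : |x| > R} define U(x) := 1 + m/(2|x|) and h₀(x) := m/(2·U(x)·|x|²) = m/(2|x|² + m|x|). Then for every x ∈ E_R: Δh₀(x) − (m/(U(x)·|x|²))·⟨∇h₀(x), x/|x|⟩ = m/(U(x)·|x|⁴). -/

import Mathlib

noncomputable section

open scoped RealInnerProductSpace

abbrev E3 : Type := EuclideanSpace ℝ (Fin 3)

-- norm derivative
lemma hasFDerivAt_norm' (x : E3) (hx : x ≠ 0) :
    HasFDerivAt (fun y : E3 => ‖y‖) (‖x‖⁻¹ • innerSL ℝ x) x := by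
  have h1 : HasFDerivAt (fun y : E3 => ‖y‖ ^ 2) (2 • innerSL ℝ x) x :=
    (hasStrictFDerivAt_norm_sq x).hasFDerivAt
  have hne : (‖x‖ ^ 2 : ℝ) ≠ 0 := pow_ne_zero 2 (norm_ne_zero_iff.mpr hx)
  have h2 := (Real.hasDerivAt_sqrt hne).comp_hasFDerivAt x h1
  have hfun : (fun y : E3 => Real.sqrt (‖y‖ ^ 2)) = fun y : E3 => ‖y‖ := by
    funext y; exact Real.sqrt_sq (norm_nonneg y)
  rw [show ((fun x => Real.sqrt x) ∘ fun y : E3 => ‖y‖ ^ 2) = fun y : E3 => ‖y‖ from hfun] at h2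
  refine h2.congr_fderiv (Eq.symm ?_)
  rw [Real.sqrt_sq (norm_nonneg x)]
  ext v
  simp [ContinuousLinearMap.smul_apply]
  ring

def phi1 (m r : ℝ) : ℝ := -(m * (4 * r + m)) / (2 * r ^ 2 + m * r) ^ 2
def psi (m r : ℝ) : ℝ := phi1 m r / r
def psi' (m r : ℝ) : ℝ :=
  (-(4 * m) * ((2 * r ^ 2 + m * r) ^ 2 * r) -
      -(m * (4 * r + m)) * ((2 * (2 * r ^ 2 + m * r) * (4 * r + m)) * r + (2 * r ^ 2 + m * r) ^ 2)) /
    ((2 * r ^ 2 + m * r) ^ 2 * r) ^ 2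

lemma hasDerivAt_D (m r : ℝ) : HasDerivAt (fun s => 2 * s ^ 2 + m * s) (4 * r + m) r := by
  have := ((hasDerivAt_pow 2 r).const_mul 2).add ((hasDerivAt_id r).const_mul m)
  refine this.congr_deriv (Eq.symm ?_)
  ring

lemma hasDerivAt_phi (m r : ℝ) (h : (2 * r ^ 2 + m * r) ≠ 0) :
    HasDerivAt (fun s => m / (2 * s ^ 2 + m * s)) (phi1 m r) r := by
  have := (hasDerivAt_const r m).div (hasDerivAt_D m r) h
  refine this.congr_deriv (Eq.symm ?_)
  simp [phi1]

lemma hasDerivAt_psi (m r : ℝ) (h : (2 * r ^ 2 + m * r) ≠ 0) (hr : r ≠ 0) :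
    HasDerivAt (fun s => psi m s) (psi' m r) r := by
  have hQne : ((2 * r ^ 2 + m * r) ^ 2 * r) ≠ 0 := mul_ne_zero (pow_ne_zero 2 h) hr
  have hN : HasDerivAt (fun s : ℝ => -(m * (4 * s + m))) (-(4 * m)) r := by
    have := ((((hasDerivAt_id r).const_mul 4).add_const m).const_mul m).neg
    refine this.congr_deriv (Eq.symm ?_)
    ring
  have hQ : HasDerivAt (fun s : ℝ => (2 * s ^ 2 + m * s) ^ 2 * s)
      ((2 * (2 * r ^ 2 + m * r) * (4 * r + m)) * r + (2 * r ^ 2 + m * r) ^ 2) r := by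
    have := ((hasDerivAt_D m r).pow 2).mul (hasDerivAt_id r)
    refine this.congr_deriv (Eq.symm ?_)
    simp only [id_eq, Nat.cast_ofNat, Pi.pow_apply]
    ring
  have heq : (fun s => psi m s) = fun s => -(m * (4 * s + m)) / ((2 * s ^ 2 + m * s) ^ 2 * s) := by
    funext s
    simp [psi, phi1, div_div]
  rw [heq]
  exact hN.div hQ hQne

lemma hasGradientAt_h (m : ℝ) (x : E3) (hx : x ≠ 0) (h : (2 * ‖x‖ ^ 2 + m * ‖x‖) ≠ 0) :
    HasGradientAt (fun y : E3 => m / (2 * ‖y‖ ^ 2 + m * ‖y‖)) (psi m ‖x‖ • x) x := by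
  have hF := (hasDerivAt_phi m ‖x‖ h).comp_hasFDerivAt x (hasFDerivAt_norm' x hx)
  rw [hasGradientAt_iff_hasFDerivAt]
  refine hF.congr_fderiv (Eq.symm ?_)
  ext v
  simp [InnerProductSpace.toDual_apply_apply, psi, real_inner_smul_left, div_eq_mul_inv]
  ring

lemma trace_formula (A : E3 →L[ℝ] E3) :
    LinearMap.trace ℝ E3 (A : E3 →ₗ[ℝ] E3) = ∑ i : Fin 3, A (EuclideanSpace.single i 1) i := by
  rw [LinearMap.trace_eq_matrix_trace ℝ ((EuclideanSpace.basisFun (Fin 3) ℝ).toBasis)]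
  simp [Matrix.trace, LinearMap.toMatrix_apply, Matrix.diag]

lemma hasFDerivAt_grad (m : ℝ) (x : E3) (hx : x ≠ 0) (h : (2 * ‖x‖ ^ 2 + m * ‖x‖) ≠ 0) :
    HasFDerivAt (fun y : E3 => psi m ‖y‖ • y)
      (psi m ‖x‖ • ContinuousLinearMap.id ℝ E3 +
        (psi' m ‖x‖ • (‖x‖⁻¹ • innerSL ℝ x)).smulRight x) x := by
  have hc := (hasDerivAt_psi m ‖x‖ h (norm_ne_zero_iff.mpr hx)).comp_hasFDerivAt x
    (hasFDerivAt_norm' x hx)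
  exact hc.smul (hasFDerivAt_id x)

/-- Hessian of `u` at `x`, viewed as a continuous linear map `v ↦ D²u(x)·v`. -/
noncomputable def hess (u : E3 → ℝ) (x : E3) : E3 →L[ℝ] E3 :=
  fderiv ℝ (gradient u) x

/-- Laplacian of `u` at `x`: the trace of the Hessian. -/
noncomputable def lap (u : E3 → ℝ) (x : E3) : ℝ :=
  LinearMap.trace ℝ E3 (hess u x : E3 →ₗ[ℝ] E3)

/-- With `U(x) = 1 + m/(2|x|)` and `h₀(x) = m/(2|x|² + m|x|)` on
`E_R = {|x| > R}`, `R > |m|/2`, one has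
`Δh₀ - (m/(U|x|²))·⟨∇h₀, x/|x|⟩ = m/(U|x|⁴)` on `E_R`. -/
theorem schwarzschild_ansatz_computation (m R : ℝ) (hR : |m| / 2 < R)
    (U h₀ : E3 → ℝ)
    (hU : ∀ x : E3, U x = 1 + m / (2 * ‖x‖))
    (hh₀ : ∀ x : E3, h₀ x = m / (2 * ‖x‖ ^ 2 + m * ‖x‖)) :
    ∀ x : E3, R < ‖x‖ →
      lap h₀ x - m / (U x * ‖x‖ ^ 2) * ⟪gradient h₀ x, ‖x‖⁻¹ • x⟫ =
        m / (U x * ‖x‖ ^ 4) := by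
  have hRpos : 0 ≤ R := le_of_lt (lt_of_le_of_lt (by positivity) hR)
  have key : ∀ y : E3, R < ‖y‖ →
      0 < ‖y‖ ∧ 0 < 2 * ‖y‖ + m ∧ (2 * ‖y‖ ^ 2 + m * ‖y‖) ≠ 0 ∧ y ≠ 0 := by
    intro y hy
    have h1 : 0 < ‖y‖ := lt_of_le_of_lt hRpos hy
    have h2 : |m| < 2 * ‖y‖ := by
      have := (div_lt_iff₀ (by norm_num : (0:ℝ) < 2)).mp (lt_trans hR hy)
      linarith
    have h3 : 0 < 2 * ‖y‖ + m := by
      have := neg_abs_le m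
      linarith
    refine ⟨h1, h3, ?_, norm_ne_zero_iff.mp (ne_of_gt h1)⟩
    have : 2 * ‖y‖ ^ 2 + m * ‖y‖ = ‖y‖ * (2 * ‖y‖ + m) := by ring
    rw [this]
    positivity
  have hfun : h₀ = fun y : E3 => m / (2 * ‖y‖ ^ 2 + m * ‖y‖) := funext hh₀
  have hgrad : ∀ y : E3, R < ‖y‖ → gradient h₀ y = psi m ‖y‖ • y := by
    intro y hy
    obtain ⟨_, _, hD, hy0⟩ := key y hy
    rw [hfun]
    exact (hasGradientAt_h m y hy0 hD).gradient
  intro x hx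
  obtain ⟨hr, hrm, hD, hx0⟩ := key x hx
  have hrne : ‖x‖ ≠ 0 := ne_of_gt hr
  -- Hessian
  have hev : gradient h₀ =ᶠ[nhds x] fun y : E3 => psi m ‖y‖ • y := by
    filter_upwards [(isOpen_lt continuous_const continuous_norm).mem_nhds hx] with y hy
    exact hgrad y hy
  have hfd := (hasFDerivAt_grad m x hx0 hD).fderiv
  have hhess : hess h₀ x = psi m ‖x‖ • ContinuousLinearMap.id ℝ E3 +
      (psi' m ‖x‖ • (‖x‖⁻¹ • innerSL ℝ x)).smulRight x := by
    rw [hess, hev.fderiv_eq, hfd]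
  -- Laplacian
  have hlap : lap h₀ x = 3 * psi m ‖x‖ + psi' m ‖x‖ * ‖x‖⁻¹ * ‖x‖ ^ 2 := by
    rw [lap, hhess, trace_formula]
    have hval : ∀ i : Fin 3,
        (psi m ‖x‖ • ContinuousLinearMap.id ℝ E3 +
          (psi' m ‖x‖ • (‖x‖⁻¹ • innerSL ℝ x)).smulRight x) (EuclideanSpace.single i 1) i =
        psi m ‖x‖ + psi' m ‖x‖ * ‖x‖⁻¹ * (x i * x i) := by
      intro i
      simp [ContinuousLinearMap.smulRight_apply, real_inner_smul_left,
        EuclideanSpace.single_apply, PiLp.inner_apply, RCLike.inner_apply, conj_trivial]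
      ring
    rw [Finset.sum_congr rfl fun i _ => hval i]
    rw [Finset.sum_add_distrib, ← Finset.mul_sum]
    have hsum : ∑ i : Fin 3, x i * x i = ‖x‖ ^ 2 := by
      rw [← real_inner_self_eq_norm_sq]
      simp only [PiLp.inner_apply, RCLike.inner_apply, conj_trivial]
    rw [hsum]
    simp
  -- inner product term
  have hinner : ⟪gradient h₀ x, ‖x‖⁻¹ • x⟫ = psi m ‖x‖ * (‖x‖⁻¹ * ‖x‖ ^ 2) := by
    rw [hgrad x hx, real_inner_smul_left, real_inner_smul_right, real_inner_self_eq_norm_sq]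
  rw [hlap, hinner, hU x]
  simp only [psi, psi', phi1]
  have hDne : (2 * ‖x‖ ^ 2 + m * ‖x‖) ≠ 0 := hD
  have hUne : (2 * ‖x‖ + m) ≠ 0 := ne_of_gt hrm
  field_simp
  rw [div_eq_div_iff (pow_ne_zero 3 (by linarith)) (by linarith)]
  ring
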